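/- For every integer N ≥ 2 and λ ≠ 0, the functions u(τ) = λ⁻¹ (c₊τ^{N/2}+c₋τ^{−N/2}) / (τ[(1−N)c₊τ^{N/2}+(1+N)c₋τ^{−N/2}]) with c₊+c₋ = 1, and u(τ) = λ⁻¹·2/((1−N²)τ), are solutions of the Chazy-XI equation u''' = λ(N²−1)u·u'' + λ(N²−13)(u')² + 12λ²(N²−1)u²u' − 3λ³(N²−1)²u⁴, on any simply connected domain in ℂ∖{0} avoiding zeros of the denominators. -/

import Mathlib

open Filter

lemma scale_aux (A lam a b c d : ℂ) (hlam : lam ≠ 0)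
    (h : d = (A-1)*a*c + (A-13)*b^2 + 12*(A-1)*a^2*b - 3*(A-1)^2*a^4) :
    lam⁻¹ * d = lam*(A-1)*(lam⁻¹*a)*(lam⁻¹*c) + lam*(A-13)*(lam⁻¹*b)^2
      + 12*lam^2*(A-1)*(lam⁻¹*a)^2*(lam⁻¹*b) - 3*lam^3*(A-1)^2*(lam⁻¹*a)^4 := by
  subst h
  have hm : lam * lam⁻¹ = 1 := mul_inv_cancel₀ hlam
  linear_combination (-((A-1)*a*c*lam⁻¹ + (A-13)*b^2*lam⁻¹
    + 12*(A-1)*a^2*b*lam⁻¹*(lam*lam⁻¹+1)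
    - 3*(A-1)^2*a^4*lam⁻¹*((lam*lam⁻¹)^2+lam*lam⁻¹+1))) * hm

set_option maxHeartbeats 2000000 in

lemma chazy_aux (A lam : ℂ) (hlam : lam ≠ 0) (U : Set ℂ) (hU : IsOpen U)
    (g u : ℂ → ℂ) (hs0 : ∀ s ∈ U, s ≠ 0)
    (hg : ∀ s ∈ U, HasDerivAt g ((A * g s ^ 2 - (g s - 1) ^ 2) / (2 * s)) s)
    (hu : ∀ s ∈ U, u s = lam⁻¹ * (g s / s)) :
    ∀ s ∈ U, deriv (deriv (deriv u)) s =
      lam * (A - 1) * u s * deriv (deriv u) s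
        + lam * (A - 13) * (deriv u s) ^ 2
        + 12 * lam ^ 2 * (A - 1) * (u s) ^ 2 * deriv u s
        - 3 * lam ^ 3 * (A - 1) ^ 2 * (u s) ^ 4 := by
  have key1 : ∀ s ∈ U, HasDerivAt u
      (lam⁻¹ * (((A - 1) * g s ^ 2 - 1) / (2 * s ^ 2))) s := by
    intro s hs
    have h0 := hs0 s hs
    have h := ((hg s hs).div (hasDerivAt_id s) h0).const_mul lam⁻¹
    have h' : HasDerivAt (fun t => lam⁻¹ * (g t / t))
        (lam⁻¹ * (((A - 1) * g s ^ 2 - 1) / (2 * s ^ 2))) s := by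
      refine h.congr_deriv (Eq.symm ?_)
      simp only [id_eq]
      field_simp
      ring
    exact h'.congr_of_eventuallyEq (eventuallyEq_of_mem (hU.mem_nhds hs) hu)
  have du1 : ∀ s ∈ U, deriv u s = lam⁻¹ * (((A - 1) * g s ^ 2 - 1) / (2 * s ^ 2)) :=
    fun s hs => (key1 s hs).deriv
  have key2 : ∀ s ∈ U, HasDerivAt (deriv u)
      (lam⁻¹ * (((A - 1) ^ 2 * g s ^ 3 - (A - 1) * g s + 2) / (2 * s ^ 3))) s := by
    intro s hs
    have h0 := hs0 s hs
    have hnum : HasDerivAt (fun t => (A - 1) * g t ^ 2 - 1)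
        ((A - 1) * ((2 : ℕ) * g s ^ 1 * ((A * g s ^ 2 - (g s - 1) ^ 2) / (2 * s)))) s :=
      (((hg s hs).pow 2).const_mul (A - 1)).sub_const 1
    have hden : HasDerivAt (fun t : ℂ => 2 * t ^ 2) (2 * ((2 : ℕ) * s ^ 1)) s :=
      (hasDerivAt_pow 2 s).const_mul 2
    have hden0 : 2 * s ^ 2 ≠ 0 := mul_ne_zero two_ne_zero (pow_ne_zero _ h0)
    have h := (hnum.div hden hden0).const_mul lam⁻¹
    have h' : HasDerivAt (fun t => lam⁻¹ * (((A - 1) * g t ^ 2 - 1) / (2 * t ^ 2)))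
        (lam⁻¹ * (((A - 1) ^ 2 * g s ^ 3 - (A - 1) * g s + 2) / (2 * s ^ 3))) s := by
      refine h.congr_deriv (Eq.symm ?_)
      field_simp
      ring
    exact h'.congr_of_eventuallyEq (eventuallyEq_of_mem (hU.mem_nhds hs) du1)
  have du2 : ∀ s ∈ U, deriv (deriv u) s =
      lam⁻¹ * (((A - 1) ^ 2 * g s ^ 3 - (A - 1) * g s + 2) / (2 * s ^ 3)) :=
    fun s hs => (key2 s hs).deriv
  have key3 : ∀ s ∈ U, HasDerivAt (deriv (deriv u))
      (lam⁻¹ * ((3 * (A - 1) ^ 3 * g s ^ 4 - 4 * (A - 1) ^ 2 * g s ^ 2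
        + 4 * (A - 1) * g s + (A - 13)) / (4 * s ^ 4))) s := by
    intro s hs
    have h0 := hs0 s hs
    have hnum : HasDerivAt
        (fun t => (A - 1) ^ 2 * g t ^ 3 - (A - 1) * g t + 2)
        (((A - 1) ^ 2 * ((3 : ℕ) * g s ^ 2 * ((A * g s ^ 2 - (g s - 1) ^ 2) / (2 * s)))
          - (A - 1) * ((A * g s ^ 2 - (g s - 1) ^ 2) / (2 * s)))) s :=
      ((((hg s hs).pow 3).const_mul ((A - 1) ^ 2)).sub ((hg s hs).const_mul (A - 1))).add_const 2
    have hden : HasDerivAt (fun t : ℂ => 2 * t ^ 3) (2 * ((3 : ℕ) * s ^ 2)) s :=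
      (hasDerivAt_pow 3 s).const_mul 2
    have hden0 : 2 * s ^ 3 ≠ 0 := mul_ne_zero two_ne_zero (pow_ne_zero _ h0)
    have h := (hnum.div hden hden0).const_mul lam⁻¹
    have h' : HasDerivAt
        (fun t => lam⁻¹ * (((A - 1) ^ 2 * g t ^ 3 - (A - 1) * g t + 2) / (2 * t ^ 3)))
        (lam⁻¹ * ((3 * (A - 1) ^ 3 * g s ^ 4 - 4 * (A - 1) ^ 2 * g s ^ 2
          + 4 * (A - 1) * g s + (A - 13)) / (4 * s ^ 4))) s := by
      refine h.congr_deriv (Eq.symm ?_)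
      field_simp
      ring
    exact h'.congr_of_eventuallyEq (eventuallyEq_of_mem (hU.mem_nhds hs) du2)
  intro s hs
  have h0 := hs0 s hs
  rw [(key3 s hs).deriv, du2 s hs, du1 s hs, hu s hs]
  exact scale_aux A lam (g s / s) (((A - 1) * g s ^ 2 - 1) / (2 * s ^ 2))
    (((A - 1) ^ 2 * g s ^ 3 - (A - 1) * g s + 2) / (2 * s ^ 3))
    ((3 * (A - 1) ^ 3 * g s ^ 4 - 4 * (A - 1) ^ 2 * g s ^ 2
      + 4 * (A - 1) * g s + (A - 13)) / (4 * s ^ 4)) hlam (by ring)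


set_option maxHeartbeats 2000000 in
lemma chazy_rat (A lam : ℂ) (hlam : lam ≠ 0) (hA : A ≠ 1) (U : Set ℂ) (hU : IsOpen U)
    (v : ℂ → ℂ) (hs0 : ∀ s ∈ U, s ≠ 0)
    (hv : ∀ s ∈ U, v s = lam⁻¹ * (2 / ((1 - A) * s))) :
    ∀ s ∈ U, deriv (deriv (deriv v)) s =
      lam * (A - 1) * v s * deriv (deriv v) s
        + lam * (A - 13) * (deriv v s) ^ 2
        + 12 * lam ^ 2 * (A - 1) * (v s) ^ 2 * deriv v s
        - 3 * lam ^ 3 * (A - 1) ^ 2 * (v s) ^ 4 := by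
  have h1A : (1 : ℂ) - A ≠ 0 := sub_ne_zero.mpr (Ne.symm hA)
  set c : ℂ := 2 / (1 - A) with hc_def
  have hc : (1 - A) * c = 2 := by
    rw [hc_def]; field_simp
  have hv' : ∀ s ∈ U, v s = lam⁻¹ * (c / s) := by
    intro s hs; rw [hv s hs, hc_def, div_div]
  have key1 : ∀ s ∈ U, HasDerivAt v (lam⁻¹ * (-c / s ^ 2)) s := by
    intro s hs
    have h0 := hs0 s hs
    have h := ((hasDerivAt_const s c).div (hasDerivAt_id s) h0).const_mul lam⁻¹
    have h' : HasDerivAt (fun t => lam⁻¹ * (c / t)) (lam⁻¹ * (-c / s ^ 2)) s := by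
      refine h.congr_deriv (Eq.symm ?_)
      simp only [id_eq]
      ring
    exact h'.congr_of_eventuallyEq (eventuallyEq_of_mem (hU.mem_nhds hs) hv')
  have dv1 : ∀ s ∈ U, deriv v s = lam⁻¹ * (-c / s ^ 2) := fun s hs => (key1 s hs).deriv
  have key2 : ∀ s ∈ U, HasDerivAt (deriv v) (lam⁻¹ * (2 * c / s ^ 3)) s := by
    intro s hs
    have h0 := hs0 s hs
    have h := ((hasDerivAt_const s (-c)).div (hasDerivAt_pow 2 s)
      (pow_ne_zero 2 h0)).const_mul lam⁻¹
    have h' : HasDerivAt (fun t => lam⁻¹ * (-c / t ^ 2)) (lam⁻¹ * (2 * c / s ^ 3)) s := by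
      refine h.congr_deriv (Eq.symm ?_)
      field_simp
      ring
    exact h'.congr_of_eventuallyEq (eventuallyEq_of_mem (hU.mem_nhds hs) dv1)
  have dv2 : ∀ s ∈ U, deriv (deriv v) s = lam⁻¹ * (2 * c / s ^ 3) :=
    fun s hs => (key2 s hs).deriv
  have key3 : ∀ s ∈ U, HasDerivAt (deriv (deriv v)) (lam⁻¹ * (-6 * c / s ^ 4)) s := by
    intro s hs
    have h0 := hs0 s hs
    have h := ((hasDerivAt_const s (2 * c)).div (hasDerivAt_pow 3 s)
      (pow_ne_zero 3 h0)).const_mul lam⁻¹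
    have h' : HasDerivAt (fun t => lam⁻¹ * (2 * c / t ^ 3)) (lam⁻¹ * (-6 * c / s ^ 4)) s := by
      refine h.congr_deriv (Eq.symm ?_)
      field_simp
      ring
    exact h'.congr_of_eventuallyEq (eventuallyEq_of_mem (hU.mem_nhds hs) dv2)
  intro s hs
  have h0 := hs0 s hs
  rw [(key3 s hs).deriv, dv2 s hs, dv1 s hs, hv' s hs]
  refine scale_aux A lam (c / s) (-c / s ^ 2) (2 * c / s ^ 3) (-6 * c / s ^ 4) hlam ?_
  linear_combination ((-3 * (A - 1) * c ^ 3 - 6 * c ^ 2 + 3 * c) / s ^ 4) * hc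

set_option maxHeartbeats 4000000 in
/-- the explicit two-parameter and rational solutions of the
Chazy-XI(N) equation, for every integer `N ≥ 2` and `λ ≠ 0`; the powers
`τ^{±N/2}` are defined via a fixed branch `L` of the logarithm on the
simply connected domain `U ⊆ ℂ∖{0}`. -/
theorem stmt_18 (N : ℕ) (hN : 2 ≤ N) (lam : ℂ) (hlam : lam ≠ 0)
    (cp cm : ℂ) (hcpm : cp + cm = 1)
    (U : Set ℂ) (hU : IsOpen U) (hU0 : ∀ s ∈ U, s ≠ 0)
    (L : ℂ → ℂ)
    (hLexp : ∀ s ∈ U, Complex.exp (L s) = s)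
    (hLD : ∀ s ∈ U, HasDerivAt L s⁻¹ s)
    (u v : ℂ → ℂ)
    (hu : ∀ s ∈ U, u s = lam⁻¹ *
      ((cp * Complex.exp (((N : ℂ) / 2) * L s) + cm * Complex.exp (-((N : ℂ) / 2) * L s)) /
        (s * ((1 - (N : ℂ)) * cp * Complex.exp (((N : ℂ) / 2) * L s)
          + (1 + (N : ℂ)) * cm * Complex.exp (-((N : ℂ) / 2) * L s)))))
    (hud : ∀ s ∈ U,
      s * ((1 - (N : ℂ)) * cp * Complex.exp (((N : ℂ) / 2) * L s)
        + (1 + (N : ℂ)) * cm * Complex.exp (-((N : ℂ) / 2) * L s)) ≠ 0)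
    (hv : ∀ s ∈ U, v s = lam⁻¹ * (2 / ((1 - (N : ℂ) ^ 2) * s))) :
    (∀ s ∈ U, deriv (deriv (deriv u)) s =
      lam * ((N : ℂ) ^ 2 - 1) * u s * deriv (deriv u) s
        + lam * ((N : ℂ) ^ 2 - 13) * (deriv u s) ^ 2
        + 12 * lam ^ 2 * ((N : ℂ) ^ 2 - 1) * (u s) ^ 2 * deriv u s
        - 3 * lam ^ 3 * ((N : ℂ) ^ 2 - 1) ^ 2 * (u s) ^ 4) ∧
    (∀ s ∈ U, deriv (deriv (deriv v)) s =
      lam * ((N : ℂ) ^ 2 - 1) * v s * deriv (deriv v) s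
        + lam * ((N : ℂ) ^ 2 - 13) * (deriv v s) ^ 2
        + 12 * lam ^ 2 * ((N : ℂ) ^ 2 - 1) * (v s) ^ 2 * deriv v s
        - 3 * lam ^ 3 * ((N : ℂ) ^ 2 - 1) ^ 2 * (v s) ^ 4) := by
  have hA : ((N : ℂ)) ^ 2 ≠ 1 := by
    intro h
    have h' : ((N ^ 2 : ℕ) : ℂ) = ((1 : ℕ) : ℂ) := by push_cast; simpa using h
    have := Nat.cast_injective (R := ℂ) h'
    nlinarith
  constructor
  · -- two-parameter solution
    set g : ℂ → ℂ := fun t =>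
      (cp * Complex.exp (((N : ℂ) / 2) * L t) + cm * Complex.exp (-((N : ℂ) / 2) * L t)) /
        ((1 - (N : ℂ)) * cp * Complex.exp (((N : ℂ) / 2) * L t)
          + (1 + (N : ℂ)) * cm * Complex.exp (-((N : ℂ) / 2) * L t)) with hg_def
    have hQ0 : ∀ s ∈ U, (1 - (N : ℂ)) * cp * Complex.exp (((N : ℂ) / 2) * L s)
        + (1 + (N : ℂ)) * cm * Complex.exp (-((N : ℂ) / 2) * L s) ≠ 0 := by
      intro s hs h
      exact hud s hs (by rw [h, mul_zero])
    have hg : ∀ s ∈ U, HasDerivAt g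
        ((((N : ℂ) ^ 2) * g s ^ 2 - (g s - 1) ^ 2) / (2 * s)) s := by
      intro s hs
      have h0 := hU0 s hs
      have hE : HasDerivAt (fun t => Complex.exp (((N : ℂ) / 2) * L t))
          (Complex.exp (((N : ℂ) / 2) * L s) * ((N : ℂ) / 2 * s⁻¹)) s :=
        ((hLD s hs).const_mul ((N : ℂ) / 2)).cexp
      have hF : HasDerivAt (fun t => Complex.exp (-((N : ℂ) / 2) * L t))
          (Complex.exp (-((N : ℂ) / 2) * L s) * (-((N : ℂ) / 2) * s⁻¹)) s :=
        ((hLD s hs).const_mul (-((N : ℂ) / 2))).cexp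
      have hP := (hE.const_mul cp).add (hF.const_mul cm)
      have hQ := (hE.const_mul ((1 - (N : ℂ)) * cp)).add (hF.const_mul ((1 + (N : ℂ)) * cm))
      have h := hP.div hQ (hQ0 s hs)
      have hQQ : ((1 - (N : ℂ)) * cp * Complex.exp (((N : ℂ) / 2) * L s) + (1 + (N : ℂ)) * cm * Complex.exp (-((N : ℂ) / 2) * L s)) * ((1 - (N : ℂ)) * cp * Complex.exp (((N : ℂ) / 2) * L s) + (1 + (N : ℂ)) * cm * Complex.exp (-((N : ℂ) / 2) * L s))⁻¹ = 1 := mul_inv_cancel₀ (hQ0 s hs)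
      have hss : s * s⁻¹ = 1 := mul_inv_cancel₀ h0
      refine h.congr_deriv (Eq.symm ?_)
      simp only [hg_def, Pi.add_apply]
      rw [div_eq_div_iff (mul_ne_zero two_ne_zero h0) (pow_ne_zero 2 (hQ0 s hs))]
      linear_combination (((N : ℂ) ^ 2 - 1) * (cp * Complex.exp (((N : ℂ) / 2) * L s) + cm * Complex.exp (-((N : ℂ) / 2) * L s)) ^ 2 * (((1 - (N : ℂ)) * cp * Complex.exp (((N : ℂ) / 2) * L s) + (1 + (N : ℂ)) * cm * Complex.exp (-((N : ℂ) / 2) * L s)) * ((1 - (N : ℂ)) * cp * Complex.exp (((N : ℂ) / 2) * L s) + (1 + (N : ℂ)) * cm * Complex.exp (-((N : ℂ) / 2) * L s))⁻¹ + 1)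
          + 2 * (cp * Complex.exp (((N : ℂ) / 2) * L s) + cm * Complex.exp (-((N : ℂ) / 2) * L s)) * ((1 - (N : ℂ)) * cp * Complex.exp (((N : ℂ) / 2) * L s) + (1 + (N : ℂ)) * cm * Complex.exp (-((N : ℂ) / 2) * L s))) * hQQ
        - 4 * (N : ℂ) ^ 2 * cp * cm * Complex.exp (((N : ℂ) / 2) * L s) * Complex.exp (-((N : ℂ) / 2) * L s) * hss
    have hu' : ∀ s ∈ U, u s = lam⁻¹ * (g s / s) := by
      intro s hs
      rw [hu s hs, hg_def]
      simp only [div_div]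
      rw [mul_comm s]
    exact chazy_aux ((N : ℂ) ^ 2) lam hlam U hU g u hU0 hg hu'
  · exact chazy_rat ((N : ℂ) ^ 2) lam hlam hA U hU v hU0 hv
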